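/- arXiv:1608.04973 — 2 statements merged into one kernel-verified Lean document; each statement's English description precedes it below -/
import Mathlib

section
/- Let G=(V,E) be a finite simple graph with |E| ≥ 1 and let K be a field. Then the cut ideal I_G contains a nonzero homogeneous element of degree 1 (i.e. the degree-1 component (I_G)_1 is nonzero) if and only if G is disconnected. -/
open scoped Classical

noncomputable section

namespace CutPaper

open MvPolynomial

/-- An edge `e` is cut by the partition `A | Aᶜ` if it has exactly one endpoint in `A`. -/
def IsCutEdge {V : Type} (A : Set V) (e : Sym2 V) : Prop :=
  ∃ u v : V, e = s(u, v) ∧ u ∈ A ∧ v ∉ A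

/-- The cut set of `A`: all edges of `G` with exactly one endpoint in `A`. -/
def cutSet {V : Type} (G : SimpleGraph V) (A : Set V) : Set (Sym2 V) :=
  {e ∈ G.edgeSet | IsCutEdge A e}

lemma isCutEdge_compl {V : Type} (A : Set V) (e : Sym2 V) :
    IsCutEdge Aᶜ e ↔ IsCutEdge A e := by
  constructor <;> rintro ⟨u, v, rfl, hu, hv⟩
  · exact ⟨v, u, Sym2.eq_swap, Set.notMem_compl_iff.mp hv, hu⟩
  · exact ⟨v, u, Sym2.eq_swap, hv, not_not_intro hu⟩

/-- Two subsets determine the same unordered partition `A | Aᶜ` of `V`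
iff they are equal or complementary. -/
def partitionSetoid (V : Type) : Setoid (Set V) where
  r A B := B = A ∨ B = Aᶜ
  iseqv := by
    refine ⟨fun A => Or.inl rfl, @fun A B h => ?_, @fun A B C h1 h2 => ?_⟩
    · rcases h with rfl | rfl
      · exact Or.inl rfl
      · exact Or.inr (compl_compl A).symm
    · rcases h1 with rfl | rfl <;> rcases h2 with rfl | rfl
      · exact Or.inl rfl
      · exact Or.inr rfl
      · exact Or.inr rfl
      · exact Or.inl (compl_compl A)

/-- The unordered partitions `A | Aᶜ` of `V`, indexing the variables of `S_G`. -/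
abbrev Partition (V : Type) := Quotient (partitionSetoid V)

variable (K : Type) [CommRing K]

/-- The variable `q_{A|Aᶜ}` of the polynomial ring `S_G`. -/
def qPart {V : Type} (A : Set V) : MvPolynomial (Partition V) K :=
  X (Quotient.mk (partitionSetoid V) A)

/-- The monomial `u_A = ∏_{e ∈ Cut(A)} s_e · ∏_{e ∈ E \ Cut(A)} t_e`;
the variable `s_e` is `X (true, e)` and `t_e` is `X (false, e)`. -/
def cutMonomial {V : Type} [Finite V] (G : SimpleGraph V) (A : Set V) :
    MvPolynomial (Bool × Sym2 V) K :=
  ∏ e ∈ (Set.toFinite G.edgeSet).toFinset,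
    if IsCutEdge A e then X (true, e) else X (false, e)

lemma cutMonomial_compl {V : Type} [Finite V] (G : SimpleGraph V) (A : Set V) :
    cutMonomial K G Aᶜ = cutMonomial K G A := by
  unfold cutMonomial
  refine Finset.prod_congr rfl fun e _ => ?_
  by_cases h : IsCutEdge A e
  · rw [if_pos ((isCutEdge_compl A e).mpr h), if_pos h]
  · rw [if_neg fun hc => h ((isCutEdge_compl A e).mp hc), if_neg h]

/-- The `K`-algebra homomorphism `φ_G : S_G → R_G`, `q_{A|Aᶜ} ↦ u_A`. -/
def phi {V : Type} [Finite V] (G : SimpleGraph V) :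
    MvPolynomial (Partition V) K →ₐ[K] MvPolynomial (Bool × Sym2 V) K :=
  aeval fun p : Partition V =>
    Quotient.lift (cutMonomial K G)
      (fun A B hAB => by
        have h : B = A ∨ B = Aᶜ := hAB
        rcases h with rfl | rfl
        · rfl
        · exact (cutMonomial_compl K G A).symm) p

/-- The cut ideal `I_G = ker φ_G`. -/
def cutIdeal {V : Type} [Finite V] (G : SimpleGraph V) :
    Ideal (MvPolynomial (Partition V) K) :=
  RingHom.ker (phi K G)

/-- The cut algebra `K[G]`, i.e. the image of `φ_G`: the `K`-subalgebra of `R_G`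
generated by the monomials `u_A`. -/
def cutAlgebra {V : Type} [Finite V] (G : SimpleGraph V) :
    Subalgebra K (MvPolynomial (Bool × Sym2 V) K) :=
  Algebra.adjoin K {m | ∃ A : Set V, m = cutMonomial K G A}

/-- The generator `u_A` of the cut algebra, as an element of the cut algebra. -/
def uGen {V : Type} [Finite V] (G : SimpleGraph V) (A : Set V) : ↥(cutAlgebra K G) :=
  ⟨cutMonomial K G A, Algebra.subset_adjoin ⟨A, rfl⟩⟩

/-- An element of `S_G/I` is homogeneous of degree `d` if it is the class of a homogeneous
polynomial of degree `d`. -/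
def QuotHomogeneous {σ : Type} (I : Ideal (MvPolynomial σ K)) (d : ℕ)
    (x : MvPolynomial σ K ⧸ I) : Prop :=
  ∃ f : MvPolynomial σ K, f.IsHomogeneous d ∧ Ideal.Quotient.mk I f = x

/-- The cut algebra of `H` is an algebra retract of the cut algebra of `G`:
there are homogeneous `K`-algebra homomorphisms `ι : K[H] → K[G]` (injective) and
`π : K[G] → K[H]` with `π ∘ ι = id`. -/
def CutAlgebraRetract {V W : Type} [Finite V] [Finite W]
    (H : SimpleGraph W) (G : SimpleGraph V) : Prop :=
  ∃ (ι : (MvPolynomial (Partition W) K ⧸ cutIdeal K H) →ₐ[K]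
      (MvPolynomial (Partition V) K ⧸ cutIdeal K G))
    (π : (MvPolynomial (Partition V) K ⧸ cutIdeal K G) →ₐ[K]
      (MvPolynomial (Partition W) K ⧸ cutIdeal K H)),
    Function.Injective ι ∧
    (∀ d x, QuotHomogeneous K (cutIdeal K H) d x →
      ∃ d', QuotHomogeneous K (cutIdeal K G) d' (ι x)) ∧
    (∀ d x, QuotHomogeneous K (cutIdeal K G) d x →
      ∃ d', QuotHomogeneous K (cutIdeal K H) d' (π x)) ∧
    π.comp ι = AlgHom.id K _

/-- The graph obtained from `G` by contracting the edge `{u, v}`: the vertex `u` is removed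
and merged into `v`. -/
def contractEdge {V : Type} (G : SimpleGraph V) (u v : V) :
    SimpleGraph {x : V // x ≠ u} where
  Adj a b := a ≠ b ∧
    (G.Adj a b ∨ ((a : V) = v ∧ G.Adj u b) ∨ ((b : V) = v ∧ G.Adj a u))
  symm := ⟨by
    rintro a b ⟨hne, h | ⟨ha, h⟩ | ⟨hb, h⟩⟩
    · exact ⟨hne.symm, Or.inl h.symm⟩
    · exact ⟨hne.symm, Or.inr (Or.inr ⟨ha, h.symm⟩)⟩
    · exact ⟨hne.symm, Or.inr (Or.inl ⟨hb, h.symm⟩)⟩⟩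
  loopless := ⟨fun a h => h.1 rfl⟩

/-- The induced subgraph `G_W` is a neighborhood-minor of `G`: `W` and `W' = Wᶜ` are nonempty
and there is a vertex `v ∈ W` with `W ∩ N_G(W') ⊆ N_{G_W}[v]`. -/
def IsNeighborhoodMinor {V : Type} (G : SimpleGraph V) (W : Set V) : Prop :=
  W.Nonempty ∧ Wᶜ.Nonempty ∧
    ∃ v ∈ W, ∀ x ∈ W, (∃ y ∈ Wᶜ, G.Adj y x) → x = v ∨ G.Adj v x

/-- The cut vector `δ_A ∈ {0,1}^E` of the partition `A | Aᶜ`. -/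
def cutVector {V : Type} (G : SimpleGraph V) (A : Set V) : ↥G.edgeSet → ℝ :=
  fun e => if IsCutEdge A (e : Sym2 V) then 1 else 0

/-- The cut polytope `Cut^□(G) ⊆ ℝ^E`: the convex hull of the cut vectors. -/
def cutPolytope {V : Type} (G : SimpleGraph V) : Set (↥G.edgeSet → ℝ) :=
  convexHull ℝ {x | ∃ A : Set V, x = cutVector G A}

/-- `F` is a face of `P`: either a trivial face (`P` or `∅`), or the intersection of `P`
with a supporting hyperplane. -/
def IsFace {α : Type} (P F : Set (α → ℝ)) : Prop :=
  F = P ∨ F = ∅ ∨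
    ∃ (φ : (α → ℝ) →ₗ[ℝ] ℝ) (c : ℝ), φ ≠ 0 ∧
      (∀ x ∈ P, φ x ≤ c) ∧ F = P ∩ {x | φ x = c}

/-- `P` and `Q` are affinely isomorphic: there is a bijective map from `P` onto `Q`
extending to an affine map. -/
def AffinelyIsomorphic {α β : Type} (P : Set (α → ℝ)) (Q : Set (β → ℝ)) : Prop :=
  ∃ f : (α → ℝ) →ᵃ[ℝ] (β → ℝ), Set.InjOn f P ∧ f '' P = Q

/-- The monomial `z · ∏_{e ∈ Cut(A)} y_e` of the polytopal algebra of the cut polytope;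
the variable `z` is `X none` and `y_e` is `X (some e)`. -/
def polytopeMonomial {V : Type} [Finite V] (G : SimpleGraph V) (A : Set V) :
    MvPolynomial (Option (Sym2 V)) K :=
  X none * ∏ e ∈ (Set.toFinite (cutSet G A)).toFinset, X (some e)

/-- The polytopal algebra `K[Cut^□(G)]`: the subalgebra of `K[y_e (e ∈ E), z]` generated by
the monomials `z · y^{δ_A}` attached to the lattice points (= cut vectors) of `Cut^□(G)`. -/
def polytopalAlgebra {V : Type} [Finite V] (G : SimpleGraph V) :
    Subalgebra K (MvPolynomial (Option (Sym2 V)) K) :=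
  Algebra.adjoin K {m | ∃ A : Set V, m = polytopeMonomial K G A}

/-- `G'` is a combinatorial retract of `G`: it is obtained from `G` by a finite sequence of
edge contractions and neighborhood-minors. -/
inductive CombinatorialRetract : ∀ {V W : Type}, SimpleGraph V → SimpleGraph W → Prop
  | refl {V : Type} (G : SimpleGraph V) : CombinatorialRetract G G
  | contract {V W : Type} (G : SimpleGraph V) (u v : V) (huv : G.Adj u v)
      (G' : SimpleGraph W) (h : CombinatorialRetract (contractEdge G u v) G') :
      CombinatorialRetract G G'
  | nbhdMinor {V W : Type} (G : SimpleGraph V) (S : Set V)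
      (hS : IsNeighborhoodMinor G S) (G' : SimpleGraph W)
      (h : CombinatorialRetract (SimpleGraph.induce S G) G') :
      CombinatorialRetract G G'

section Aux

/-- A finsupp to `ℕ` of total degree 1 is a single. -/
lemma degree_one_eq_single {σ : Type} (d : σ →₀ ℕ) (h : d.degree = 1) :
    ∃ a, d = Finsupp.single a 1 := by
  have hsupp : d.support.Nonempty := by
    rcases Finset.eq_empty_or_nonempty d.support with he | hne
    · exfalso
      have : d = 0 := Finsupp.support_eq_empty.mp he
      rw [this, map_zero] at h; exact one_ne_zero h.symm
    · exact hne
  obtain ⟨a, ha⟩ := hsupp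
  refine ⟨a, ?_⟩
  have hsum : ∑ x ∈ d.support, d x = 1 := h
  have hdecomp : d a + ∑ x ∈ d.support.erase a, d x = 1 := by
    rw [Finset.add_sum_erase _ _ ha]; exact hsum
  have hda : d a ≠ 0 := Finsupp.mem_support_iff.mp ha
  have hda1 : d a = 1 := by omega
  have hrest : ∑ x ∈ d.support.erase a, d x = 0 := by omega
  ext x
  by_cases hx : x = a
  · subst hx; simp [hda1]
  · rw [Finsupp.single_apply, if_neg (fun hc => hx hc.symm)]
    by_cases hxs : x ∈ d.support
    · exact (Finset.sum_eq_zero_iff.mp hrest x (Finset.mem_erase.mpr ⟨hx, hxs⟩))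
    · exact Finsupp.notMem_support_iff.mp hxs

variable {V : Type} [Fintype V]

/-- For an edge given explicitly, being a cut edge is an "exactly one endpoint" condition. -/
lemma isCutEdge_mk (A : Set V) (u v : V) :
    IsCutEdge A s(u, v) ↔ (u ∈ A ∧ v ∉ A) ∨ (v ∈ A ∧ u ∉ A) := by
  constructor
  · rintro ⟨x, y, hxy, hx, hy⟩
    rcases Sym2.eq_iff.mp hxy with ⟨h1, h2⟩ | ⟨h1, h2⟩
    · subst h1; subst h2; exact Or.inl ⟨hx, hy⟩
    · subst h1; subst h2; exact Or.inr ⟨hx, hy⟩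
  · rintro (⟨h1, h2⟩ | ⟨h1, h2⟩)
    · exact ⟨u, v, rfl, h1, h2⟩
    · exact ⟨v, u, Sym2.eq_swap, h1, h2⟩

/-- The exponent vector of the monomial `u_A`. -/
def expVec (G : SimpleGraph V) (A : Set V) : (Bool × Sym2 V) →₀ ℕ :=
  ∑ e ∈ (Set.toFinite G.edgeSet).toFinset,
    Finsupp.single (decide (IsCutEdge A e), e) 1

lemma expVec_compl (G : SimpleGraph V) (A : Set V) :
    expVec G Aᶜ = expVec G A := by
  unfold expVec
  refine Finset.sum_congr rfl fun e _ => ?_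
  rw [decide_eq_decide.mpr (isCutEdge_compl A e)]

lemma prod_X_eq_monomial {R σ τ : Type} [CommSemiring R] (s : Finset τ) (g : τ → σ) :
    (∏ e ∈ s, (MvPolynomial.X (g e) : MvPolynomial σ R)) =
      MvPolynomial.monomial (∑ e ∈ s, Finsupp.single (g e) 1) 1 := by
  induction s using Finset.induction with
  | empty => simp
  | insert _ _ hni ih =>
      rw [Finset.prod_insert hni, Finset.sum_insert hni, ih, ← pow_one (MvPolynomial.X (g _)),
        MvPolynomial.X_pow_eq_monomial, MvPolynomial.monomial_mul, one_mul]

lemma cutMonomial_eq_monomial [Nontrivial K] (G : SimpleGraph V) (A : Set V) :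
    cutMonomial K G A = MvPolynomial.monomial (expVec G A) (1 : K) := by
  unfold cutMonomial expVec
  rw [← prod_X_eq_monomial]
  refine Finset.prod_congr rfl fun e _ => ?_
  by_cases h : IsCutEdge A e
  · simp [h]
  · simp [h]

lemma expVec_apply_true (G : SimpleGraph V) (A : Set V) (e : Sym2 V)
    (he : e ∈ (Set.toFinite G.edgeSet).toFinset) :
    expVec G A (true, e) = if IsCutEdge A e then 1 else 0 := by
  unfold expVec
  rw [Finsupp.finset_sum_apply]
  rw [Finset.sum_eq_single_of_mem e he]
  · by_cases h : IsCutEdge A e <;> simp [Finsupp.single_apply, Prod.ext_iff, h]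
  · intro e' _ hne
    simp [Finsupp.single_apply, Prod.ext_iff, hne]

lemma expVec_inj_iff (G : SimpleGraph V) (hG : G.Connected) (A B : Set V)
    (h : expVec G A = expVec G B) : B = A ∨ B = Aᶜ := by
  have hcut : ∀ e ∈ G.edgeSet, (IsCutEdge A e ↔ IsCutEdge B e) := by
    intro e he
    have he' : e ∈ (Set.toFinite G.edgeSet).toFinset := (Set.Finite.mem_toFinset _).mpr he
    have := DFunLike.congr_fun h (true, e)
    rw [expVec_apply_true G A e he', expVec_apply_true G B e he'] at this
    by_cases hA : IsCutEdge A e <;> by_cases hB : IsCutEdge B e <;> simp [hA, hB] at this ⊢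
  -- the "XOR" function x ↦ (x ∈ A ↔ x ∈ B) is constant along edges
  have hstep : ∀ {x y : V}, G.Adj x y → ((x ∈ A ↔ x ∈ B) ↔ (y ∈ A ↔ y ∈ B)) := by
    intro x y hxy
    have := hcut s(x, y) (G.mem_edgeSet.mpr hxy)
    rw [isCutEdge_mk, isCutEdge_mk] at this
    tauto
  have hwalk : ∀ {x y : V}, G.Walk x y → ((x ∈ A ↔ x ∈ B) ↔ (y ∈ A ↔ y ∈ B)) := by
    intro x y w
    induction w with
    | nil => exact Iff.rfl
    | cons hadj _ ih => exact (hstep hadj).trans ih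
  obtain ⟨v0⟩ := hG.nonempty
  have hconst : ∀ x : V, ((x ∈ A ↔ x ∈ B) ↔ (v0 ∈ A ↔ v0 ∈ B)) := fun x =>
    hwalk (hG.preconnected x v0).some
  by_cases h0 : v0 ∈ A ↔ v0 ∈ B
  · left; ext x; exact ((hconst x).mpr h0).symm
  · right; ext x
    have := hconst x
    simp only [Set.mem_compl_iff]
    tauto

lemma phi_X [Nontrivial K] (G : SimpleGraph V) (A : Set V) :
    phi K G (MvPolynomial.X (Quotient.mk (partitionSetoid V) A)) =
      MvPolynomial.monomial (expVec G A) (1 : K) := by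
  rw [phi, MvPolynomial.aeval_X]
  exact cutMonomial_eq_monomial K G A

end Aux


lemma phi_monomial_single {V : Type} [Fintype V] (K : Type) [Field K]
    (G : SimpleGraph V) (A : Set V) (c : K) :
    phi K G (MvPolynomial.monomial
        (Finsupp.single (Quotient.mk (partitionSetoid V) A) 1) c) =
      MvPolynomial.monomial (expVec G A) c := by
  rw [← MvPolynomial.C_mul_X_eq_monomial, map_mul]
  have h1 : phi K G (MvPolynomial.C c) = MvPolynomial.C c := by
    rw [phi, MvPolynomial.aeval_C, MvPolynomial.algebraMap_eq]
  rw [h1, phi_X, MvPolynomial.C_mul_monomial, mul_one]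

theorem stmt1 {V : Type} [Fintype V] [Nonempty V] (K : Type) [Field K]
    (G : SimpleGraph V) (hE : G.edgeSet.Nonempty) :
    (∃ f ∈ cutIdeal K G, f ≠ 0 ∧ f.IsHomogeneous 1) ↔ ¬ G.Connected := by
  constructor
  · rintro ⟨f, hfI, hf0, hfh⟩ hG
    have hker : phi K G f = 0 := by rwa [cutIdeal, RingHom.mem_ker] at hfI
    -- pick a monomial of f
    obtain ⟨d, hdsupp⟩ := MvPolynomial.support_nonempty.mpr hf0
    have hdc : MvPolynomial.coeff d f ≠ 0 := MvPolynomial.mem_support_iff.mp hdsupp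
    have hdeg : d.degree = 1 := by
      rw [Finsupp.degree_eq_weight_one]; exact hfh hdc
    obtain ⟨p0, hd⟩ := degree_one_eq_single d hdeg
    obtain ⟨A0, hA0⟩ := Quotient.exists_rep p0
    -- extract the coefficient of the monomial `u_{A0}` from `phi f = 0`
    have hterm : ∀ d' ∈ f.support,
        MvPolynomial.coeff (expVec G A0)
          (phi K G (MvPolynomial.monomial d' (MvPolynomial.coeff d' f))) =
        if d' = d then MvPolynomial.coeff d f else 0 := by
      intro d' hd'supp
      have hdeg' : d'.degree = 1 := by
        rw [Finsupp.degree_eq_weight_one]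
        exact hfh (MvPolynomial.mem_support_iff.mp hd'supp)
      obtain ⟨p', hd'⟩ := degree_one_eq_single d' hdeg'
      obtain ⟨A', hA'⟩ := Quotient.exists_rep p'
      subst hd'
      subst hA'
      subst hd
      subst hA0
      rw [phi_monomial_single K G A', MvPolynomial.coeff_monomial]
      by_cases heq : expVec G A' = expVec G A0
      · have hpp : Quotient.mk (partitionSetoid V) A' = Quotient.mk (partitionSetoid V) A0 :=
          (Quotient.sound (expVec_inj_iff G hG A0 A' heq.symm)).symm
        rw [if_pos heq, if_pos (by rw [hpp]), hpp]
      · have hdd : (Finsupp.single (Quotient.mk (partitionSetoid V) A') 1 : Partition V →₀ ℕ) ≠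
            Finsupp.single (Quotient.mk (partitionSetoid V) A0) 1 := by
          intro hc
          apply heq
          have hpp := ((Finsupp.single_eq_single_iff _ _ _ _).mp hc).elim
            (fun h => h.1) (fun h => absurd h.1 one_ne_zero)
          rcases Quotient.exact hpp with h | h
          · rw [h]
          · rw [h, expVec_compl]
        rw [if_neg heq, if_neg hdd]
    have hcoeff : MvPolynomial.coeff (expVec G A0) (phi K G f) = MvPolynomial.coeff d f := by
      conv_lhs => rw [f.as_sum, map_sum, MvPolynomial.coeff_sum]
      rw [Finset.sum_congr rfl hterm, Finset.sum_ite_eq' f.support d, if_pos hdsupp]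
    rw [hker, MvPolynomial.coeff_zero] at hcoeff
    exact hdc hcoeff.symm
  · intro hG
    have hpre : ¬ G.Preconnected := fun hp => hG ⟨hp⟩
    simp only [SimpleGraph.Preconnected, not_forall] at hpre
    obtain ⟨u, v, huv⟩ := hpre
    set A : Set V := {x | G.Reachable u x} with hAdef
    have hu : u ∈ A := SimpleGraph.Reachable.refl u
    have hv : v ∉ A := huv
    have hnc : ∀ e ∈ G.edgeSet, ¬ IsCutEdge A e := by
      rintro e he ⟨x, y, rfl, hx, hy⟩
      exact hy ((hx : G.Reachable u x).trans (G.mem_edgeSet.mp he).reachable)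
    have hmono : cutMonomial K G A = cutMonomial K G (∅ : Set V) := by
      unfold cutMonomial
      refine Finset.prod_congr rfl fun e he => ?_
      rw [if_neg (hnc e ((Set.Finite.mem_toFinset _).mp he)), if_neg]
      rintro ⟨x, y, -, hx, -⟩
      exact hx
    refine ⟨MvPolynomial.X (Quotient.mk (partitionSetoid V) A) -
        MvPolynomial.X (Quotient.mk (partitionSetoid V) (∅ : Set V)), ?_, ?_, ?_⟩
    · rw [cutIdeal, RingHom.mem_ker, map_sub]
      show phi K G (MvPolynomial.X (Quotient.mk (partitionSetoid V) A)) -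
        phi K G (MvPolynomial.X (Quotient.mk (partitionSetoid V) (∅ : Set V))) = 0
      simp only [phi, MvPolynomial.aeval_X]
      show cutMonomial K G A - cutMonomial K G (∅ : Set V) = 0
      rw [hmono, sub_self]
    · intro hcontra
      have hXX := sub_eq_zero.mp hcontra
      have := Quotient.exact (MvPolynomial.X_injective hXX)
      rcases this with h | h
      · rw [← h] at hu; exact hu
      · have hvc : v ∈ Aᶜ := hv
        rw [← h] at hvc; exact hvc
    · exact (MvPolynomial.isHomogeneous_X K _).sub (MvPolynomial.isHomogeneous_X K _)

end CutPaper
end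
end

section
/- Let G=(V,E) be a finite simple graph, K a field, and let G' be a graph obtained from G by contracting an edge of G. Then the cut algebra K[G'] ≅ S_{G'}/I_{G'} is an algebra retract of the cut algebra K[G] ≅ S_G/I_G. -/
open scoped Classical

noncomputable section

namespace CutPaper

open MvPolynomial

variable (K : Type) [CommRing K]

lemma isCutEdge_pair {V : Type} {A : Set V} {a b : V} :
    IsCutEdge A s(a, b) ↔ ((a ∈ A ∧ b ∉ A) ∨ (b ∈ A ∧ a ∉ A)) := by
  constructor
  · rintro ⟨x, y, hxy, hx, hy⟩
    rw [Sym2.eq_iff] at hxy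
    rcases hxy with ⟨rfl, rfl⟩ | ⟨rfl, rfl⟩
    · exact Or.inl ⟨hx, hy⟩
    · exact Or.inr ⟨hx, hy⟩
  · rintro (⟨ha, hb⟩ | ⟨hb, ha⟩)
    · exact ⟨a, b, rfl, ha, hb⟩
    · exact ⟨b, a, Sym2.eq_swap.symm, hb, ha⟩

lemma isCutEdge_map {V W : Type} (g : V → W) (B : Set W) (e : Sym2 V) :
    IsCutEdge B (Sym2.map g e) ↔ IsCutEdge (g ⁻¹' B) e := by
  induction e using Sym2.ind with
  | _ a b => simp only [Sym2.map_pair_eq, isCutEdge_pair, Set.mem_preimage]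


section Contract

variable {V : Type} {G : SimpleGraph V} {u v : V}

/-- The map `V → V ∖ {u}` collapsing `u` onto `v`. -/
def fmap (huv : G.Adj u v) : V → {x : V // x ≠ u} :=
  fun x => if h : x = u then ⟨v, huv.ne'⟩ else ⟨x, h⟩

lemma fmap_val (huv : G.Adj u v) (x : V) :
    (fmap huv x : V) = if x = u then v else x := by
  unfold fmap; split_ifs <;> rfl

lemma fmap_eq_iff (huv : G.Adj u v) (x y : V) :
    fmap huv x = fmap huv y ↔ (x = y ∨ (x = u ∧ y = v) ∨ (x = v ∧ y = u)) := by
  have hne : u ≠ v := huv.ne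
  rw [Subtype.ext_iff, fmap_val, fmap_val]
  split_ifs with h1 h2 h2 <;> subst_vars <;> constructor <;> intro h <;>
    first
      | tauto
      | (subst_vars; tauto)
      | (rcases h with h | h | h <;> subst_vars <;> tauto)

/-- Contraction map on edges. -/
def conE (huv : G.Adj u v) : Sym2 V → Sym2 {x : V // x ≠ u} :=
  Sym2.map (fmap huv)

lemma conE_mem_edgeSet (huv : G.Adj u v) {e : Sym2 V}
    (he : e ∈ G.edgeSet) (hne : e ≠ s(u, v)) :
    conE huv e ∈ (contractEdge G u v).edgeSet := by
  induction e using Sym2.ind with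
  | _ a b =>
    rw [SimpleGraph.mem_edgeSet] at he
    show (contractEdge G u v).Adj (fmap huv a) (fmap huv b)
    by_cases ha : a = u <;> by_cases hb : b = u
    · exact absurd (ha ▸ hb ▸ he) (G.irrefl)
    · subst ha
      have hbv : b ≠ v := fun h => hne (by rw [h])
      refine ⟨fun hc => ?_, Or.inr (Or.inl ⟨?_, ?_⟩)⟩
      · rw [fmap_eq_iff] at hc
        rcases hc with h | ⟨-, h⟩ | ⟨h, -⟩
        · exact he.ne h
        · exact hbv h
        · exact huv.ne h
      · rw [fmap_val]; simp
      · rwa [fmap_val, if_neg hb]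
    · subst hb
      have hav : a ≠ v := fun h => hne (by rw [h, Sym2.eq_swap])
      refine ⟨fun hc => ?_, Or.inr (Or.inr ⟨?_, ?_⟩)⟩
      · rw [fmap_eq_iff] at hc
        rcases hc with h | ⟨h, -⟩ | ⟨h, -⟩
        · exact he.ne h
        · exact he.ne h
        · exact hav h
      · rw [fmap_val]; simp
      · rwa [fmap_val, if_neg ha]
    · refine ⟨fun hc => ?_, Or.inl ?_⟩
      · rw [fmap_eq_iff] at hc
        rcases hc with h | ⟨h, -⟩ | ⟨-, h⟩
        · exact he.ne h
        · exact ha h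
        · exact hb h
      · rwa [fmap_val, fmap_val, if_neg ha, if_neg hb]

/-- `e` is a preferred edge: it is not of the form `{u,x}` with `x` also a
`G`-neighbor of `v`. -/
def Pref (G : SimpleGraph V) (u v : V) (e : Sym2 V) : Prop :=
  ∀ x, e = s(u, x) → ¬ G.Adj v x

lemma pref_pair (huv : G.Adj u v) {a b : V} (hp : Pref G u v s(a, b)) (ha : a = u) :
    ¬ G.Adj v b := hp b (by rw [ha])

lemma pref_pair' (huv : G.Adj u v) {a b : V} (hp : Pref G u v s(a, b)) (hb : b = u) :
    ¬ G.Adj v a := hp a (by rw [hb, Sym2.eq_swap])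

lemma fmap_subtype (huv : G.Adj u v) (x : {x : V // x ≠ u}) : fmap huv x.1 = x := by
  unfold fmap; rw [dif_neg x.2]

lemma fmap_u (huv : G.Adj u v) : fmap huv u = ⟨v, huv.ne'⟩ := by
  unfold fmap; rw [dif_pos rfl]

lemma conE_pairCase (huv : G.Adj u v) {a b c d : V}
    (hab : G.Adj a b) (hcd : G.Adj c d)
    (hn₁ : s(a, b) ≠ s(u, v)) (hn₂ : s(c, d) ≠ s(u, v))
    (hp₁ : Pref G u v s(a, b)) (hp₂ : Pref G u v s(c, d))
    (h1 : fmap huv a = fmap huv c) (h2 : fmap huv b = fmap huv d) :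
    s(a, b) = s(c, d) := by
  rw [fmap_eq_iff] at h1 h2
  rcases h1 with h1 | ⟨ha, hc⟩ | ⟨ha, hc⟩ <;>
    rcases h2 with h2 | ⟨hb, hd⟩ | ⟨hb, hd⟩
  · rw [h1, h2]
  · refine absurd ?_ (pref_pair' huv hp₁ hb)
    have h := hcd.symm
    rw [hd] at h
    rwa [← h1] at h
  · refine absurd ?_ (pref_pair' huv hp₂ hd)
    have h := hab.symm
    rw [hb] at h
    rwa [h1] at h
  · refine absurd ?_ (pref_pair huv hp₁ ha)
    have h := hcd
    rw [hc] at h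
    rwa [← h2] at h
  · rw [ha, hb] at hab
    exact absurd hab (G.irrefl)
  · exact absurd (by rw [ha, hb]) hn₁
  · refine absurd ?_ (pref_pair huv hp₂ hc)
    have h := hab
    rw [ha] at h
    rwa [h2] at h
  · exact absurd (by rw [ha, hb, Sym2.eq_swap]) hn₁
  · rw [ha, hb] at hab
    exact absurd hab (G.irrefl)

lemma conE_injOn (huv : G.Adj u v) {e₁ e₂ : Sym2 V}
    (h₁ : e₁ ∈ G.edgeSet) (h₂ : e₂ ∈ G.edgeSet)
    (hn₁ : e₁ ≠ s(u, v)) (hn₂ : e₂ ≠ s(u, v))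
    (hp₁ : Pref G u v e₁) (hp₂ : Pref G u v e₂)
    (hc : conE huv e₁ = conE huv e₂) : e₁ = e₂ := by
  induction e₁ using Sym2.ind with
  | _ a b =>
  induction e₂ using Sym2.ind with
  | _ c d =>
  rw [SimpleGraph.mem_edgeSet] at h₁ h₂
  unfold conE at hc
  rw [Sym2.map_pair_eq, Sym2.map_pair_eq, Sym2.eq_iff] at hc
  rcases hc with ⟨hac, hbd⟩ | ⟨had, hbc⟩
  · exact conE_pairCase huv h₁ h₂ hn₁ hn₂ hp₁ hp₂ hac hbd
  · have := conE_pairCase huv h₁ h₂.symm hn₁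
      (by rwa [Sym2.eq_swap]) hp₁
      (fun x hx => hp₂ x (by rwa [Sym2.eq_swap])) had hbc
    rwa [Sym2.eq_swap (a := d)] at this

lemma conE_surjOn (huv : G.Adj u v) {e' : Sym2 {x : V // x ≠ u}}
    (he' : e' ∈ (contractEdge G u v).edgeSet) :
    ∃ e, e ∈ G.edgeSet ∧ e ≠ s(u, v) ∧ Pref G u v e ∧ conE huv e = e' := by
  induction e' using Sym2.ind with
  | _ a' b' =>
  obtain ⟨hne, hadj⟩ := he'
  by_cases hG : G.Adj (a' : V) (b' : V)
  · refine ⟨s(a'.1, b'.1), hG, ?_, ?_, ?_⟩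
    · intro h
      rw [Sym2.eq_iff] at h
      rcases h with ⟨h, -⟩ | ⟨-, h⟩
      · exact a'.2 h
      · exact b'.2 h
    · intro x hx
      rw [Sym2.eq_iff] at hx
      rcases hx with ⟨h, -⟩ | ⟨-, h⟩
      · exact absurd h a'.2
      · exact absurd h b'.2
    · unfold conE
      rw [Sym2.map_pair_eq, fmap_subtype, fmap_subtype]
  · rcases hadj with h | ⟨hav, hub⟩ | ⟨hbv, hau⟩
    · exact absurd h hG
    · -- a' = v, G.Adj u b'
      have hbvne : (b' : V) ≠ v := fun h => hne (Subtype.ext (hav.trans h.symm))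
      refine ⟨s(u, b'.1), hub, ?_, ?_, ?_⟩
      · intro h
        rw [Sym2.eq_iff] at h
        rcases h with ⟨-, h⟩ | ⟨h, -⟩
        · exact hbvne h
        · exact huv.ne h
      · intro x hx
        rw [Sym2.eq_iff] at hx
        rcases hx with ⟨-, h⟩ | ⟨-, h⟩
        · subst h
          rw [hav] at hG
          exact hG
        · exact absurd h b'.2
      · unfold conE
        rw [Sym2.map_pair_eq, fmap_u, fmap_subtype,
          show (⟨v, huv.ne'⟩ : {x : V // x ≠ u}) = a' from Subtype.ext hav.symm]
    · -- b' = v, G.Adj a' u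
      have havne : (a' : V) ≠ v := fun h => hne (Subtype.ext (h.trans hbv.symm))
      refine ⟨s(a'.1, u), hau, ?_, ?_, ?_⟩
      · intro h
        rw [Sym2.eq_iff] at h
        rcases h with ⟨h, -⟩ | ⟨h, -⟩
        · exact a'.2 h
        · exact havne h
      · intro x hx
        rw [Sym2.eq_iff] at hx
        rcases hx with ⟨h, -⟩ | ⟨h, -⟩
        · exact absurd h a'.2
        · subst h
          rw [hbv] at hG
          intro hc
          exact hG hc.symm
      · unfold conE
        rw [Sym2.map_pair_eq, fmap_u, fmap_subtype,
          show (⟨v, huv.ne'⟩ : {x : V // x ≠ u}) = b' from Subtype.ext hbv.symm]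

end Contract

section Algebraic

variable {V : Type} [Finite V] (K : Type) [CommRing K] {G : SimpleGraph V} {u v : V}

/-- The cut status of an edge, as a boolean. -/
def cbool {V : Type} (A : Set V) (e : Sym2 V) : Bool :=
  if IsCutEdge A e then true else false

lemma cbool_congr {V W : Type} {A : Set V} {B : Set W} {e : Sym2 V} {e' : Sym2 W}
    (h : IsCutEdge A e ↔ IsCutEdge B e') : cbool A e = cbool B e' := by
  unfold cbool
  by_cases hc : IsCutEdge A e
  · rw [if_pos hc, if_pos (h.mp hc)]
  · rw [if_neg hc, if_neg (fun hc' => hc (h.mpr hc'))]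

lemma cutMonomial_eq (A : Set V) :
    cutMonomial K G A
      = ∏ e ∈ (Set.toFinite G.edgeSet).toFinset,
          (X (cbool A e, e) : MvPolynomial (Bool × Sym2 V) K) := by
  unfold cutMonomial cbool
  refine Finset.prod_congr rfl fun e _ => ?_
  by_cases h : IsCutEdge A e <;> simp [h]

lemma fmap_u_eq_fmap_v (huv : G.Adj u v) : fmap huv u = fmap huv v :=
  Subtype.ext (by rw [fmap_val, fmap_val, if_pos rfl, if_neg huv.ne'])

lemma not_isCutEdge_lift (huv : G.Adj u v) (B : Set {x : V // x ≠ u}) :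
    ¬ IsCutEdge (fmap huv ⁻¹' B) s(u, v) := by
  rw [isCutEdge_pair]
  have h : u ∈ fmap huv ⁻¹' B ↔ v ∈ fmap huv ⁻¹' B := by
    simp only [Set.mem_preimage, fmap_u_eq_fmap_v huv]
  rintro (⟨h1, h2⟩ | ⟨h1, h2⟩)
  · exact h2 (h.mp h1)
  · exact h2 (h.mpr h1)

/-- The variable assignment defining `τ : R_{G'} → R_G`. -/
def tauVar (huv : G.Adj u v) (e₀ : Sym2 {x : V // x ≠ u}) :
    Bool × Sym2 {x : V // x ≠ u} → MvPolynomial (Bool × Sym2 V) K :=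
  fun p =>
    (if p.2 = e₀ then (X (false, s(u, v)) : MvPolynomial (Bool × Sym2 V) K) else 1) *
    ∏ e ∈ ((Set.toFinite G.edgeSet).toFinset.erase s(u, v)).filter
        (fun e => conE huv e = p.2), X (p.1, e)

lemma conE_maps_to (huv : G.Adj u v) :
    ∀ e ∈ (Set.toFinite G.edgeSet).toFinset.erase s(u, v),
      conE huv e ∈ (Set.toFinite (contractEdge G u v).edgeSet).toFinset := by
  intro e he
  obtain ⟨hne, hmem⟩ := Finset.mem_erase.mp he
  rw [Set.Finite.mem_toFinset] at hmem ⊢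
  exact conE_mem_edgeSet huv hmem hne

lemma tau_cutMonomial (huv : G.Adj u v) {e₀ : Sym2 {x : V // x ≠ u}}
    (he₀ : e₀ ∈ (contractEdge G u v).edgeSet) (B : Set {x : V // x ≠ u}) :
    aeval (tauVar K huv e₀) (cutMonomial K (contractEdge G u v) B)
      = cutMonomial K G (fmap huv ⁻¹' B) := by
  have huvmem : s(u, v) ∈ (Set.toFinite G.edgeSet).toFinset := by
    rw [Set.Finite.mem_toFinset]; exact huv
  rw [cutMonomial_eq, map_prod]
  simp only [aeval_X]
  unfold tauVar
  rw [Finset.prod_mul_distrib]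
  have h1 : (∏ e' ∈ (Set.toFinite (contractEdge G u v).edgeSet).toFinset,
      if e' = e₀ then (X (false, s(u, v)) : MvPolynomial (Bool × Sym2 V) K) else 1)
        = X (false, s(u, v)) := by
    rw [Finset.prod_ite_eq' _ e₀ (fun _ => (X (false, s(u, v)) : MvPolynomial (Bool × Sym2 V) K)),
      if_pos (by rwa [Set.Finite.mem_toFinset])]
  rw [h1]
  have h2 : ∏ e' ∈ (Set.toFinite (contractEdge G u v).edgeSet).toFinset,
      ∏ e ∈ ((Set.toFinite G.edgeSet).toFinset.erase s(u, v)).filter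
        (fun e => conE huv e = e'), (X (cbool B e', e) : MvPolynomial (Bool × Sym2 V) K)
      = ∏ e ∈ (Set.toFinite G.edgeSet).toFinset.erase s(u, v),
          X (cbool (fmap huv ⁻¹' B) e, e) := by
    rw [← Finset.prod_fiberwise_of_maps_to (conE_maps_to huv)
      (fun e => (X (cbool (fmap huv ⁻¹' B) e, e) : MvPolynomial (Bool × Sym2 V) K))]
    refine Finset.prod_congr rfl fun e' _ => Finset.prod_congr rfl fun e he => ?_
    have hce : conE huv e = e' := (Finset.mem_filter.mp he).2
    have : IsCutEdge B e' ↔ IsCutEdge (fmap huv ⁻¹' B) e := by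
      rw [← hce]; exact isCutEdge_map (fmap huv) B e
    rw [cbool_congr this]
  rw [h2, cutMonomial_eq, ← Finset.mul_prod_erase _ _ huvmem]
  congr 1
  have : cbool (fmap huv ⁻¹' B) s(u, v) = false := by
    unfold cbool; rw [if_neg (not_isCutEdge_lift huv B)]
  rw [this]

/-- The variable assignment defining `ρ : R_G → R_{G'}`. -/
def rhoVar (huv : G.Adj u v) :
    Bool × Sym2 V → MvPolynomial (Bool × Sym2 {x : V // x ≠ u}) K :=
  fun p =>
    if p.2 = s(u, v) then (if p.1 then 0 else 1)
    else if Pref G u v p.2 then X (p.1, conE huv p.2) else 1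

lemma preim_fmap_val (huv : G.Adj u v) {A : Set V} (hA : u ∈ A ↔ v ∈ A) :
    fmap huv ⁻¹' (Subtype.val ⁻¹' A) = A := by
  ext x
  simp only [Set.mem_preimage, fmap_val]
  split_ifs with h
  · subst h; exact hA.symm
  · exact Iff.rfl

lemma rho_cutMonomial (huv : G.Adj u v) (A : Set V) :
    aeval (rhoVar K huv) (cutMonomial K G A)
      = if u ∈ A ↔ v ∈ A
          then cutMonomial K (contractEdge G u v) (Subtype.val ⁻¹' A) else 0 := by
  have huvmem : s(u, v) ∈ (Set.toFinite G.edgeSet).toFinset := by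
    rw [Set.Finite.mem_toFinset]; exact huv
  rw [cutMonomial_eq, map_prod]
  simp only [aeval_X]
  by_cases hA : u ∈ A ↔ v ∈ A
  · rw [if_pos hA, ← Finset.mul_prod_erase _ _ huvmem]
    have hncut : ¬ IsCutEdge A s(u, v) := by
      rw [isCutEdge_pair]; tauto
    have h1 : rhoVar K huv (cbool A s(u, v), s(u, v)) = 1 := by
      simp [rhoVar, cbool, hncut]
    rw [h1, one_mul]
    have hp1 : ∀ e ∈ (Set.toFinite G.edgeSet).toFinset.erase s(u, v),
        rhoVar K huv (cbool A e, e) ≠ 1 → Pref G u v e := by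
      intro e he hne
      by_contra hp
      exact hne (by simp [rhoVar, (Finset.mem_erase.mp he).1, hp])
    rw [← Finset.prod_filter_of_ne hp1]
    rw [cutMonomial_eq]
    refine Finset.prod_nbij (conE huv) ?_ ?_ ?_ ?_
    · intro e he
      obtain ⟨he1, _⟩ := Finset.mem_filter.mp he
      exact conE_maps_to huv e he1
    · intro e₁ h₁ e₂ h₂ hc
      simp only [Finset.coe_filter, Set.mem_setOf_eq, Finset.mem_erase,
        Set.Finite.mem_toFinset] at h₁ h₂
      exact conE_injOn huv h₁.1.2 h₂.1.2 h₁.1.1 h₂.1.1 h₁.2 h₂.2 hc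
    · intro e' he'
      rw [Finset.mem_coe, Set.Finite.mem_toFinset] at he'
      obtain ⟨e, hmem, hne, hpref, hce⟩ := conE_surjOn huv he'
      refine ⟨e, ?_, hce⟩
      simp only [Finset.mem_coe, Finset.mem_filter, Finset.mem_erase,
        Set.Finite.mem_toFinset]
      exact ⟨⟨hne, hmem⟩, hpref⟩
    · intro e he
      simp only [Finset.mem_filter, Finset.mem_erase] at he
      obtain ⟨⟨hne, _⟩, hpref⟩ := he
      have hval : rhoVar K huv (cbool A e, e)
          = X (cbool A e, conE huv e) := by
        simp [rhoVar, hne, hpref]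
      rw [hval]
      congr 1
      have : IsCutEdge A e ↔ IsCutEdge (Subtype.val ⁻¹' A) (conE huv e) := by
        unfold conE
        rw [isCutEdge_map, preim_fmap_val huv hA]
      rw [cbool_congr this]
  · rw [if_neg hA]
    refine Finset.prod_eq_zero huvmem ?_
    have hcut : IsCutEdge A s(u, v) := by
      rw [isCutEdge_pair]; tauto
    simp [rhoVar, cbool, hcut]

end Algebraic



section Assembly

variable {V : Type} [Fintype V] (K : Type) [Field K] {G : SimpleGraph V} {u v : V}

lemma phi_mk (G : SimpleGraph V) (A : Set V) :
    phi K G (X (Quotient.mk (partitionSetoid V) A)) = cutMonomial K G A := by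
  simp only [phi, aeval_X]
  rfl

/-- The map on partitions induced by lifting along the contraction. -/
def liftPart (huv : G.Adj u v) :
    Partition {x : V // x ≠ u} → Partition V :=
  Quotient.lift (fun B => Quotient.mk (partitionSetoid V) (fmap huv ⁻¹' B))
    (by
      intro B C h
      obtain rfl | rfl := h
      · rfl
      · exact Quotient.sound (Or.inr (by rw [Set.preimage_compl])))

/-- The substitution `ι̃ : S_{G'} → S_G`. -/
def iotaPoly (huv : G.Adj u v) :
    MvPolynomial (Partition {x : V // x ≠ u}) K →ₐ[K] MvPolynomial (Partition V) K :=
  aeval (fun p => X (liftPart huv p))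

/-- Variable assignment for `π̃ : S_G → S_{G'}` at the level of sets. -/
def dropVar (huv : G.Adj u v) (A : Set V) :
    MvPolynomial (Partition {x : V // x ≠ u}) K :=
  if u ∈ A ↔ v ∈ A
    then X (Quotient.mk (partitionSetoid {x : V // x ≠ u}) (Subtype.val ⁻¹' A)) else 0

lemma dropVar_sound (huv : G.Adj u v) (A C : Set V)
    (h : (partitionSetoid V).r A C) : dropVar K huv A = dropVar K huv C := by
  obtain rfl | rfl := h
  · rfl
  · unfold dropVar
    by_cases hA : u ∈ A ↔ v ∈ A
    · have hA' : u ∈ Aᶜ ↔ v ∈ Aᶜ := by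
        simp only [Set.mem_compl_iff]
        exact not_iff_not.mpr hA
      rw [if_pos hA, if_pos hA']
      exact congrArg X (Quotient.sound (Or.inr (by rw [Set.preimage_compl])))
    · have hA' : ¬ (u ∈ Aᶜ ↔ v ∈ Aᶜ) := by
        simp only [Set.mem_compl_iff]
        exact fun hc => hA (not_iff_not.mp hc)
      rw [if_neg hA, if_neg hA']

/-- The substitution `π̃ : S_G → S_{G'}`. -/
def piPoly (huv : G.Adj u v) :
    MvPolynomial (Partition V) K →ₐ[K] MvPolynomial (Partition {x : V // x ≠ u}) K :=
  aeval (fun p => Quotient.lift (dropVar K huv) (dropVar_sound K huv) p)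

lemma phi_comp_iota (huv : G.Adj u v) {e₀ : Sym2 {x : V // x ≠ u}}
    (he₀ : e₀ ∈ (contractEdge G u v).edgeSet) :
    (phi K G).comp (iotaPoly K huv)
      = (aeval (tauVar K huv e₀)).comp (phi K (contractEdge G u v)) := by
  apply MvPolynomial.algHom_ext
  intro p
  refine Quotient.inductionOn p (fun B => ?_)
  simp only [AlgHom.comp_apply, iotaPoly, aeval_X]
  rw [show liftPart huv (Quotient.mk (partitionSetoid {x : V // x ≠ u}) B)
    = Quotient.mk (partitionSetoid V) (fmap huv ⁻¹' B) from rfl]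
  rw [phi_mk, phi_mk]
  exact (tau_cutMonomial K huv he₀ B).symm

lemma phiC_comp_pi (huv : G.Adj u v) :
    (phi K (contractEdge G u v)).comp (piPoly K huv)
      = (aeval (rhoVar K huv)).comp (phi K G) := by
  apply MvPolynomial.algHom_ext
  intro p
  refine Quotient.inductionOn p (fun A => ?_)
  simp only [AlgHom.comp_apply, piPoly, aeval_X]
  rw [phi_mk, rho_cutMonomial K huv A]
  show phi K (contractEdge G u v) (dropVar K huv A) = _
  unfold dropVar
  by_cases hA : u ∈ A ↔ v ∈ A
  · rw [if_pos hA, if_pos hA, phi_mk]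
  · rw [if_neg hA, if_neg hA, map_zero]

end Assembly

theorem stmt3 {V : Type} [Fintype V] [Nonempty V] (K : Type) [Field K]
    (G : SimpleGraph V) (u v : V) (huv : G.Adj u v) :
    CutAlgebraRetract K (contractEdge G u v) G := by
  classical
  -- the retraction π, defined uniformly
  have hpiI : ∀ f ∈ cutIdeal K G, piPoly K huv f ∈ cutIdeal K (contractEdge G u v) := by
    intro f hf
    rw [cutIdeal, RingHom.mem_ker] at hf ⊢
    have h := AlgHom.congr_fun (phiC_comp_pi K huv) f
    simp only [AlgHom.comp_apply] at h hf ⊢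
    rw [h, hf, map_zero]
  set I := cutIdeal K G with hI
  set J := cutIdeal K (contractEdge G u v) with hJ
  let πQ : (MvPolynomial (Partition V) K ⧸ I) →ₐ[K]
      MvPolynomial (Partition {x : V // x ≠ u}) K ⧸ J :=
    Ideal.Quotient.liftₐ I ((Ideal.Quotient.mkₐ K J).comp (piPoly K huv))
      (fun a ha => by
        simp only [AlgHom.comp_apply, Ideal.Quotient.mkₐ_eq_mk]
        exact Ideal.Quotient.eq_zero_iff_mem.mpr (hpiI a ha))
  have hπ_mk : ∀ f, πQ (Ideal.Quotient.mk I f)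
      = Ideal.Quotient.mk J (piPoly K huv f) := by
    intro f
    simp only [πQ, Ideal.Quotient.liftₐ_apply, Ideal.Quotient.lift_mk,
      AlgHom.coe_ringHom_mk, AlgHom.comp_apply, Ideal.Quotient.mkₐ_eq_mk]
    rfl
  have hπhom : ∀ d x, QuotHomogeneous K I d x →
      ∃ d', QuotHomogeneous K J d' (πQ x) := by
    rintro d x ⟨f, hf, rfl⟩
    refine ⟨d, piPoly K huv f, ?_, (hπ_mk f).symm⟩
    have hg : ∀ i : Partition V,
        (Quotient.lift (dropVar K huv) (dropVar_sound K huv) i).IsHomogeneous 1 := by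
      intro i
      refine Quotient.inductionOn i (fun A => ?_)
      show (dropVar K huv A).IsHomogeneous 1
      unfold dropVar
      split_ifs
      · exact isHomogeneous_X _ _
      · exact isHomogeneous_zero _ _ _
    have := hf.aeval _ hg
    rwa [one_mul] at this
  by_cases hE : (contractEdge G u v).edgeSet.Nonempty
  · -- main case: the contracted graph has an edge
    obtain ⟨e₀, he₀⟩ := hE
    have hiI : ∀ f ∈ J, iotaPoly K huv f ∈ I := by
      intro f hf
      rw [hJ, cutIdeal, RingHom.mem_ker] at hf
      rw [hI, cutIdeal, RingHom.mem_ker]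
      have h := AlgHom.congr_fun (phi_comp_iota K huv he₀) f
      simp only [AlgHom.comp_apply] at h hf ⊢
      rw [h, hf, map_zero]
    let ιQ : (MvPolynomial (Partition {x : V // x ≠ u}) K ⧸ J) →ₐ[K]
        MvPolynomial (Partition V) K ⧸ I :=
      Ideal.Quotient.liftₐ J ((Ideal.Quotient.mkₐ K I).comp (iotaPoly K huv))
        (fun a ha => by
          simp only [AlgHom.comp_apply, Ideal.Quotient.mkₐ_eq_mk]
          exact Ideal.Quotient.eq_zero_iff_mem.mpr (hiI a ha))
    have hι_mk : ∀ f, ιQ (Ideal.Quotient.mk J f)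
        = Ideal.Quotient.mk I (iotaPoly K huv f) := by
      intro f
      simp only [ιQ, Ideal.Quotient.liftₐ_apply, Ideal.Quotient.lift_mk,
        AlgHom.coe_ringHom_mk, AlgHom.comp_apply, Ideal.Quotient.mkₐ_eq_mk]
      rfl
    have hcomp : πQ.comp ιQ = AlgHom.id K _ := by
      apply Ideal.Quotient.algHom_ext
      apply MvPolynomial.algHom_ext
      intro p
      refine Quotient.inductionOn p (fun B => ?_)
      simp only [AlgHom.comp_apply, Ideal.Quotient.mkₐ_eq_mk, AlgHom.id_apply]
      rw [hι_mk]
      rw [show iotaPoly K huv (X (Quotient.mk (partitionSetoid {x : V // x ≠ u}) B))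
        = X (Quotient.mk (partitionSetoid V) (fmap huv ⁻¹' B)) from by
          simp only [iotaPoly, aeval_X]; rfl]
      rw [hπ_mk]
      congr 1
      rw [show piPoly K huv (X (Quotient.mk (partitionSetoid V) (fmap huv ⁻¹' B)))
        = dropVar K huv (fmap huv ⁻¹' B) from by simp only [piPoly, aeval_X]; rfl]
      have hsame : u ∈ fmap huv ⁻¹' B ↔ v ∈ fmap huv ⁻¹' B := by
        simp only [Set.mem_preimage, fmap_u_eq_fmap_v huv]
      have hdl : Subtype.val ⁻¹' (fmap huv ⁻¹' B) = B := by
        ext x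
        simp only [Set.mem_preimage, fmap_subtype huv x]
      unfold dropVar
      rw [if_pos hsame, hdl]
    have hinj : Function.Injective ιQ := by
      intro a b h
      have ha := AlgHom.congr_fun hcomp a
      have hb := AlgHom.congr_fun hcomp b
      simp only [AlgHom.comp_apply, AlgHom.id_apply] at ha hb
      rw [← ha, ← hb, h]
    refine ⟨ιQ, πQ, hinj, ?_, hπhom, hcomp⟩
    rintro d x ⟨f, hf, rfl⟩
    refine ⟨d, iotaPoly K huv f, ?_, (hι_mk f).symm⟩
    have := hf.aeval (fun p => (X (liftPart huv p) : MvPolynomial (Partition V) K))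
      (fun i => isHomogeneous_X _ _)
    rwa [one_mul] at this
  · -- degenerate case: the contracted graph has no edges
    have h1' : ∀ B : Set {x : V // x ≠ u},
        cutMonomial K (contractEdge G u v) B = 1 := by
      intro B
      unfold cutMonomial
      rw [Set.Finite.toFinset_eq_empty.mpr (Set.not_nonempty_iff_eq_empty.mp hE),
        Finset.prod_empty]
    have hphiX : ∀ p, phi K (contractEdge G u v) (X p) = 1 := by
      intro p
      refine Quotient.inductionOn p (fun B => ?_)
      rw [phi_mk]
      exact h1' B
    -- ι̃ sends every variable to 1
    let ιP : MvPolynomial (Partition {x : V // x ≠ u}) K →ₐ[K]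
        MvPolynomial (Partition V) K :=
      aeval (fun _ => (1 : MvPolynomial (Partition V) K))
    let ev1 : MvPolynomial (Partition {x : V // x ≠ u}) K →ₐ[K] K :=
      aeval (fun _ => (1 : K))
    have hfact : phi K (contractEdge G u v)
        = (Algebra.ofId K _).comp ev1 := by
      apply MvPolynomial.algHom_ext
      intro p
      simp only [AlgHom.comp_apply, ev1, aeval_X, map_one, hphiX p]
    have hfact2 : (phi K G).comp ιP = (Algebra.ofId K _).comp ev1 := by
      apply MvPolynomial.algHom_ext
      intro p
      simp only [AlgHom.comp_apply, ιP, ev1, aeval_X, map_one]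
    have hiI : ∀ f ∈ J, ιP f ∈ I := by
      intro f hf
      rw [hJ, cutIdeal, RingHom.mem_ker] at hf
      have h0 : ev1 f = 0 := by
        have h := AlgHom.congr_fun hfact f
        simp only [AlgHom.comp_apply] at h hf
        rw [hf] at h
        have hinj := RingHom.injective
          (algebraMap K (MvPolynomial (Bool × Sym2 {x : V // x ≠ u}) K))
        apply hinj
        rw [map_zero]
        exact h.symm
      rw [hI, cutIdeal, RingHom.mem_ker]
      have h := AlgHom.congr_fun hfact2 f
      simp only [AlgHom.comp_apply] at h ⊢
      rw [h, h0, map_zero]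
    let ιQ : (MvPolynomial (Partition {x : V // x ≠ u}) K ⧸ J) →ₐ[K]
        MvPolynomial (Partition V) K ⧸ I :=
      Ideal.Quotient.liftₐ J ((Ideal.Quotient.mkₐ K I).comp ιP)
        (fun a ha => by
          simp only [AlgHom.comp_apply, Ideal.Quotient.mkₐ_eq_mk]
          exact Ideal.Quotient.eq_zero_iff_mem.mpr (hiI a ha))
    have hι_mk : ∀ f, ιQ (Ideal.Quotient.mk J f)
        = Ideal.Quotient.mk I (ιP f) := by
      intro f
      simp only [ιQ, Ideal.Quotient.liftₐ_apply, Ideal.Quotient.lift_mk,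
        AlgHom.coe_ringHom_mk, AlgHom.comp_apply, Ideal.Quotient.mkₐ_eq_mk]
      rfl
    have hcomp : πQ.comp ιQ = AlgHom.id K _ := by
      apply Ideal.Quotient.algHom_ext
      apply MvPolynomial.algHom_ext
      intro p
      simp only [AlgHom.comp_apply, Ideal.Quotient.mkₐ_eq_mk, AlgHom.id_apply]
      rw [hι_mk]
      rw [show ιP (X p) = 1 from by simp only [ιP, aeval_X]]
      rw [map_one, map_one]
      have : Ideal.Quotient.mk J (X p) = Ideal.Quotient.mk J 1 := by
        rw [Ideal.Quotient.mk_eq_mk_iff_sub_mem]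
        rw [hJ, cutIdeal, RingHom.mem_ker]
        show phi K (contractEdge G u v) (X p - 1) = 0
        rw [map_sub, hphiX p, map_one, sub_self]
      rw [this, map_one]
    have hinj : Function.Injective ιQ := by
      intro a b h
      have ha := AlgHom.congr_fun hcomp a
      have hb := AlgHom.congr_fun hcomp b
      simp only [AlgHom.comp_apply, AlgHom.id_apply] at ha hb
      rw [← ha, ← hb, h]
    refine ⟨ιQ, πQ, hinj, ?_, hπhom, hcomp⟩
    rintro d x ⟨f, hf, rfl⟩
    refine ⟨0, ιP f, ?_, (hι_mk f).symm⟩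
    have := hf.aeval (fun _ => (1 : MvPolynomial (Partition V) K))
      (fun i => isHomogeneous_one _ _)
    rwa [zero_mul] at this

end CutPaper
end
end
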